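/- Combining covering and sampling: if V ⊆ ℝ^m is compact with an (ε/(2L'))-net of size K, v ↦ L(u,v) is L'-Lipschitz uniformly in u, |L| ≤ Δ, and (S_u, S_v) is an exact equilibrium with value V₀, then for T ≥ (8Δ²/ε²)·log(2K/δ), the uniform mixture Ŝ_u of T i.i.d. samples from S_u satisfies, with probability at least 1 − δ, sup_{v∈V} E_{u~Ŝ_u}[L(u,v)] ≤ V₀ + ε. -/

import Mathlib

noncomputable def mixExp {α : Type*} (S : α →₀ ℝ) (f : α → ℝ) : ℝ :=
  ∑ a ∈ S.support, S a * f a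

def IsMix {α : Type*} (S : α →₀ ℝ) : Prop :=
  (∀ a, 0 ≤ S a) ∧ ∑ a ∈ S.support, S a = 1

noncomputable def empExp {α : Type*} (T : ℕ) (us : Fin T → α) (f : α → ℝ) : ℝ :=
  (∑ i, f (us i)) / T

open Classical in
/-- Probability, under T i.i.d. draws from S, that the sample tuple satisfies P. -/
noncomputable def iidProb {α : Type*} (S : α →₀ ℝ) (T : ℕ)
    (P : (Fin T → α) → Prop) : ℝ :=
  ∑ us : Fin T → S.support,
    (if P (fun i => (us i : α)) then ∏ i, S (us i) else 0)


open Real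


lemma upos {q : ℝ} (hq0 : 0 ≤ q) (hq1 : q ≤ 1) (y : ℝ) :
    0 < q * exp y + (1 - q) * exp (-y) := by
  rcases eq_or_lt_of_le hq0 with h | h
  · subst h; simpa using exp_pos (-y)
  · have h1 : 0 < q * exp y := mul_pos h (exp_pos y)
    have h2 : 0 ≤ (1 - q) * exp (-y) := mul_nonneg (by linarith) (exp_pos _).le
    linarith

lemma key_ineq {q : ℝ} (hq0 : 0 ≤ q) (hq1 : q ≤ 1) {y : ℝ} (hy : 0 ≤ y) :
    q * exp y + (1 - q) * exp (-y) ≤ exp ((2*q-1)*y + y^2/2) := by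
  set u : ℝ → ℝ := fun y => q * exp y + (1 - q) * exp (-y) with hu_def
  set u' : ℝ → ℝ := fun y => q * exp y - (1 - q) * exp (-y) with hu'_def
  have hupos : ∀ y, 0 < u y := upos hq0 hq1
  have hu : ∀ y, HasDerivAt u (u' y) y := by
    intro y
    have h1 : HasDerivAt (fun y : ℝ => q * exp y) (q * exp y) y :=
      (Real.hasDerivAt_exp y).const_mul q
    have h2 : HasDerivAt (fun y : ℝ => (1-q) * exp (-y)) ((1-q) * (exp (-y) * (-1))) y :=
      (((hasDerivAt_id y).neg).exp).const_mul (1-q)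
    have := h1.add h2
    exact this.congr_deriv (by simp only [hu'_def]; ring)
  have hu' : ∀ y, HasDerivAt u' (u y) y := by
    intro y
    have h1 : HasDerivAt (fun y : ℝ => q * exp y) (q * exp y) y :=
      (Real.hasDerivAt_exp y).const_mul q
    have h2 : HasDerivAt (fun y : ℝ => (1-q) * exp (-y)) ((1-q) * (exp (-y) * (-1))) y :=
      (((hasDerivAt_id y).neg).exp).const_mul (1-q)
    have := h1.sub h2
    exact this.congr_deriv (by simp only [hu_def]; ring)
  -- d = derivative of g
  set d : ℝ → ℝ := fun y => y + (2*q-1) - u' y / u y with hd_def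
  have hd : ∀ y, HasDerivAt d (1 - (u y * u y - u' y * u' y) / (u y)^2) y := by
    intro y
    have hquot : HasDerivAt (fun y => u' y / u y)
        ((u y * u y - u' y * u' y) / (u y)^2) y :=
      (hu' y).div (hu y) (hupos y).ne'
    have hlin : HasDerivAt (fun y : ℝ => y + (2*q-1)) 1 y :=
      (hasDerivAt_id y).add_const _
    exact hlin.sub hquot
  have hd_nonneg : ∀ y, 0 ≤ 1 - (u y * u y - u' y * u' y) / (u y)^2 := by
    intro y
    rw [sub_nonneg, div_le_one (pow_pos (hupos y) 2)]
    nlinarith [sq_nonneg (u' y)]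
  have hd_mono : Monotone d :=
    monotone_of_deriv_nonneg (fun y => (hd y).differentiableAt)
      (fun y => by rw [(hd y).deriv]; exact hd_nonneg y)
  have hd0 : d 0 = 0 := by
    have h1 : u 0 = 1 := by simp [hu_def]
    have h2 : u' 0 = 2*q - 1 := by simp [hu'_def]; ring
    simp [hd_def, h1, h2]
  -- g
  set g : ℝ → ℝ := fun y => y^2/2 + (2*q-1)*y - Real.log (u y) with hg_def
  have hg : ∀ y, HasDerivAt g (d y) y := by
    intro y
    have h1 : HasDerivAt (fun y : ℝ => y^2/2 + (2*q-1)*y) (y + (2*q-1)) y := by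
      have := ((hasDerivAt_pow 2 y).div_const 2).add ((hasDerivAt_id y).const_mul (2*q-1))
      exact this.congr_deriv (by push_cast; ring)
    have h2 : HasDerivAt (fun y => Real.log (u y)) (u' y / u y) y :=
      (hu y).log (hupos y).ne'
    exact h1.sub h2
  have hg_mono : MonotoneOn g (Set.Ici (0:ℝ)) := by
    apply monotoneOn_of_deriv_nonneg (convex_Ici 0)
      (Continuous.continuousOn (continuous_iff_continuousAt.2
        fun x => (hg x).differentiableAt.continuousAt))
      (fun x _ => (hg x).differentiableAt.differentiableWithinAt)
    intro x hx
    rw [(hg x).deriv]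
    rw [interior_Ici] at hx
    have : d 0 ≤ d x := hd_mono (le_of_lt hx)
    linarith [hd0 ▸ this]
  have hg0 : g 0 = 0 := by
    have h1 : u 0 = 1 := by simp [hu_def]
    simp [hg_def, h1]
  have hgy : 0 ≤ g y := by
    have := hg_mono (Set.self_mem_Ici) (Set.mem_Ici.2 hy) hy
    linarith [hg0 ▸ this]
  have hlog : Real.log (u y) ≤ (2*q-1)*y + y^2/2 := by
    simp only [hg_def] at hgy; linarith
  calc u y = exp (Real.log (u y)) := (Real.exp_log (hupos y)).symm
    _ ≤ exp ((2*q-1)*y + y^2/2) := exp_le_exp.2 hlog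

lemma mgf_le {ι : Type*} (s : Finset ι) (p f : ι → ℝ) (Δ lam : ℝ)
    (hΔ : 0 < Δ) (hlam : 0 ≤ lam)
    (hp : ∀ i ∈ s, 0 ≤ p i) (hsum : ∑ i ∈ s, p i = 1)
    (hf : ∀ i ∈ s, |f i| ≤ Δ) :
    ∑ i ∈ s, p i * exp (lam * f i) ≤
      exp (lam * (∑ i ∈ s, p i * f i) + lam^2 * Δ^2 / 2) := by
  set μ := ∑ i ∈ s, p i * f i with hμ
  have hμabs : |μ| ≤ Δ := by
    calc |μ| ≤ ∑ i ∈ s, |p i * f i| := Finset.abs_sum_le_sum_abs _ _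
      _ ≤ ∑ i ∈ s, p i * Δ := by
          apply Finset.sum_le_sum
          intro i hi
          rw [abs_mul, abs_of_nonneg (hp i hi)]
          exact mul_le_mul_of_nonneg_left (hf i hi) (hp i hi)
      _ = Δ := by rw [← Finset.sum_mul, hsum, one_mul]
  set q := (Δ + μ)/(2*Δ) with hq
  have hq0 : 0 ≤ q := by
    apply div_nonneg _ (by linarith)
    have := abs_le.1 hμabs; linarith
  have hq1 : q ≤ 1 := by
    rw [div_le_one (by linarith)]
    have := abs_le.1 hμabs; linarith
  set y := lam * Δ with hy_def
  have hy : 0 ≤ y := mul_nonneg hlam hΔ.le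
  have step1 : ∀ i ∈ s, exp (lam * f i) ≤
      (Δ - f i)/(2*Δ) * exp (-y) + (Δ + f i)/(2*Δ) * exp y := by
    intro i hi
    have habs := abs_le.1 (hf i hi)
    have ha : (0:ℝ) ≤ (Δ - f i)/(2*Δ) := div_nonneg (by linarith) (by linarith)
    have hb : (0:ℝ) ≤ (Δ + f i)/(2*Δ) := div_nonneg (by linarith) (by linarith)
    have hab : (Δ - f i)/(2*Δ) + (Δ + f i)/(2*Δ) = 1 := by
      field_simp; ring
    have := convexOn_exp.2 (Set.mem_univ (-y)) (Set.mem_univ y) ha hb hab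
    simp only [smul_eq_mul] at this
    have harg : (Δ - f i)/(2*Δ) * (-y) + (Δ + f i)/(2*Δ) * y = lam * f i := by
      field_simp [hy_def]; ring
    rwa [harg] at this
  have step2 : ∑ i ∈ s, p i * exp (lam * f i) ≤
      (1 - q) * exp (-y) + q * exp y := by
    have : ∑ i ∈ s, p i * exp (lam * f i) ≤
        ∑ i ∈ s, p i * ((Δ - f i)/(2*Δ) * exp (-y) + (Δ + f i)/(2*Δ) * exp y) :=
      Finset.sum_le_sum fun i hi =>
        mul_le_mul_of_nonneg_left (step1 i hi) (hp i hi)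
    refine this.trans (le_of_eq ?_)
    have expand : ∀ i ∈ s, p i * ((Δ - f i)/(2*Δ) * exp (-y) + (Δ + f i)/(2*Δ) * exp y)
        = (p i * Δ - p i * f i) * (exp (-y) / (2*Δ)) + (p i * Δ + p i * f i) * (exp y / (2*Δ)) := by
      intro i hi; field_simp
    rw [Finset.sum_congr rfl expand, Finset.sum_add_distrib,
      ← Finset.sum_mul, ← Finset.sum_mul, Finset.sum_sub_distrib,
      Finset.sum_add_distrib, ← Finset.sum_mul, hsum, ← hμ]
    rw [hq]
    field_simp
    ring
  refine step2.trans ?_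
  have := key_ineq hq0 hq1 hy
  have harg2 : (2*q-1)*y + y^2/2 = lam * μ + lam^2*Δ^2/2 := by
    rw [hq, hy_def]; field_simp; ring
  rw [harg2] at this
  linarith

lemma sum_prod_pow {β : Type*} [Fintype β] (T : ℕ) (g : β → ℝ) :
    ∑ us : Fin T → β, ∏ i, g (us i) = (∑ a : β, g a) ^ T := by
  classical
  have := Finset.prod_univ_sum (fun _ : Fin T => (Finset.univ : Finset β))
    (fun _ a => g a)
  simp only [Fintype.piFinset_univ] at this
  rw [← this, Finset.prod_const, Finset.card_univ, Fintype.card_fin]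


lemma chernoff {U : Type*} (Su : U →₀ ℝ) (hSu : IsMix Su) (f : U → ℝ)
    (Δ ε c : ℝ) (hΔ : 0 < Δ) (hε : 0 < ε) (hf : ∀ u, |f u| ≤ Δ)
    (hμ : mixExp Su f ≤ c) (T : ℕ) :
    iidProb Su T (fun us => c + ε/2 < empExp T us f) ≤
      exp (-(T:ℝ) * (ε^2/(8*Δ^2))) := by
  classical
  obtain ⟨hpos, hsum⟩ := hSu
  set lam := ε/(2*Δ^2) with hlam_def
  have hlam : 0 < lam := by positivity
  set c' := c + ε/2 with hc'
  -- pointwise bound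
  have stepA : ∀ us : Fin T → Su.support,
      (if c' < empExp T (fun i => (us i : U)) f then ∏ i, Su (us i) else 0) ≤
      Real.exp (-(lam * T * c')) *
        ∏ i, (Su (us i) * Real.exp (lam * f (us i))) := by
    intro us
    have hprod : (0:ℝ) ≤ ∏ i, Su (us i) := Finset.prod_nonneg fun i _ => hpos _
    have hrhs : Real.exp (-(lam * T * c')) * ∏ i, (Su (us i) * Real.exp (lam * f (us i)))
        = (∏ i, Su (us i)) * Real.exp (lam * ((∑ i, f (us i)) - T * c')) := by
      have e1 : lam * ((∑ i, f (us i)) - T * c') = (∑ i, lam * f (us i)) - lam * T * c' := by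
        rw [mul_sub, Finset.mul_sum, mul_assoc]
      rw [Finset.prod_mul_distrib, e1, Real.exp_sub, Real.exp_sum, Real.exp_neg,
        div_eq_mul_inv]
      ring
    by_cases hcase : c' < empExp T (fun i => (us i : U)) f
    · rw [if_pos hcase, hrhs]
      have h1 : (0:ℝ) ≤ lam * ((∑ i, f (us i)) - T * c') := by
        apply mul_nonneg hlam.le
        rcases Nat.eq_zero_or_pos T with hT0 | hT0
        · subst hT0; simp
        · have hTpos : (0:ℝ) < T := Nat.cast_pos.2 hT0
          have := (lt_div_iff₀ hTpos).1 hcase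
          nlinarith
      exact le_mul_of_one_le_right hprod (Real.one_le_exp h1)
    · rw [if_neg hcase, hrhs]
      exact mul_nonneg hprod (Real.exp_pos _).le
  -- sum the pointwise bound
  have stepB : iidProb Su T (fun us => c' < empExp T us f) ≤
      Real.exp (-(lam * T * c')) *
        (∑ a ∈ Su.support, Su a * Real.exp (lam * f a)) ^ T := by
    unfold iidProb
    calc ∑ us : Fin T → Su.support,
        (if c' < empExp T (fun i => (us i : U)) f then ∏ i, Su (us i) else 0)
        ≤ ∑ us : Fin T → Su.support, Real.exp (-(lam * T * c')) *
            ∏ i, (Su (us i) * Real.exp (lam * f (us i))) :=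
          Finset.sum_le_sum fun us _ => by
            have := stepA us
            convert this using 2
      _ = Real.exp (-(lam * T * c')) * ∑ us : Fin T → Su.support,
            ∏ i, (Su (us i) * Real.exp (lam * f (us i))) := by
          rw [Finset.mul_sum]
      _ = Real.exp (-(lam * T * c')) *
            (∑ a : Su.support, Su a * Real.exp (lam * f a)) ^ T := by
          congr 1
          exact sum_prod_pow T (fun a : Su.support => Su ↑a * Real.exp (lam * f ↑a))
      _ = Real.exp (-(lam * T * c')) *
            (∑ a ∈ Su.support, Su a * Real.exp (lam * f a)) ^ T := by
          congr 2
          exact Finset.sum_coe_sort Su.support (fun a => Su a * Real.exp (lam * f a))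
  refine stepB.trans ?_
  have hM : ∑ a ∈ Su.support, Su a * Real.exp (lam * f a) ≤
      Real.exp (lam * c + lam^2 * Δ^2 / 2) := by
    have := mgf_le Su.support Su f Δ lam hΔ hlam.le (fun i _ => hpos i) hsum
      (fun i _ => hf i)
    refine this.trans (Real.exp_le_exp.2 ?_)
    have : lam * mixExp Su f ≤ lam * c := mul_le_mul_of_nonneg_left hμ hlam.le
    unfold mixExp at this
    linarith
  have hMnonneg : 0 ≤ ∑ a ∈ Su.support, Su a * Real.exp (lam * f a) :=
    Finset.sum_nonneg fun a _ => mul_nonneg (hpos a) (Real.exp_pos _).le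
  calc Real.exp (-(lam * T * c')) *
        (∑ a ∈ Su.support, Su a * Real.exp (lam * f a)) ^ T
      ≤ Real.exp (-(lam * T * c')) * Real.exp (lam * c + lam^2 * Δ^2 / 2) ^ T := by
        apply mul_le_mul_of_nonneg_left _ (Real.exp_pos _).le
        exact pow_le_pow_left₀ hMnonneg hM T
    _ = Real.exp (-(lam * T * c') + T * (lam * c + lam^2 * Δ^2 / 2)) := by
        rw [← Real.exp_nat_mul, ← Real.exp_add]
    _ = Real.exp (-(T:ℝ) * (ε^2/(8*Δ^2))) := by
        congr 1
        rw [hlam_def, hc']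
        field_simp
        ring

lemma iidProb_add_compl {U : Type*} (Su : U →₀ ℝ) (hSu : IsMix Su) (T : ℕ)
    (G : (Fin T → U) → Prop) :
    iidProb Su T G + iidProb Su T (fun us => ¬ G us) = 1 := by
  classical
  unfold iidProb
  rw [← Finset.sum_add_distrib]
  have htot : ∑ us : Fin T → Su.support, ∏ i, Su (us i) = 1 := by
    rw [sum_prod_pow T (fun a : Su.support => Su ↑a),
      show (∑ a : Su.support, Su ↑a) = ∑ a ∈ Su.support, Su a from
        Finset.sum_coe_sort Su.support (fun a => Su a), hSu.2, one_pow]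
  rw [← htot]
  apply Finset.sum_congr rfl
  intro us _
  by_cases h : G (fun i => (us i : U)) <;> simp [h]


lemma union_bound {U β : Type*} (Su : U →₀ ℝ) (hpos : ∀ a, 0 ≤ Su a) (T : ℕ)
    (G : (Fin T → U) → Prop) (N : Finset β) (Bad : β → (Fin T → U) → Prop)
    (h : ∀ us : Fin T → U, ¬ G us → ∃ n ∈ N, Bad n us) :
    iidProb Su T (fun us => ¬ G us) ≤ ∑ n ∈ N, iidProb Su T (Bad n) := by
  classical
  unfold iidProb
  rw [Finset.sum_comm]
  apply Finset.sum_le_sum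
  intro us _
  have hw : (0:ℝ) ≤ ∏ i, Su (us i) := Finset.prod_nonneg fun i _ => hpos _
  have hif : ∀ n : β, (0:ℝ) ≤ (if Bad n (fun i => (us i : U)) then ∏ i, Su (us i) else 0) := by
    intro n; split_ifs
    · exact hw
    · exact le_refl 0
  by_cases hG : G (fun i => (us i : U))
  · rw [if_neg (by simpa using hG)]
    exact Finset.sum_nonneg fun n _ => hif n
  · rw [if_pos hG]
    obtain ⟨n₀, hn₀, hbad⟩ := h _ hG
    calc (∏ i, Su (us i)) = (if Bad n₀ (fun i => (us i : U)) then ∏ i, Su (us i) else 0) := by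
          rw [if_pos hbad]
      _ ≤ ∑ n ∈ N, (if Bad n (fun i => (us i : U)) then ∏ i, Su (us i) else 0) :=
          Finset.single_le_sum (f := fun n => if Bad n (fun i => (us i : U)) then ∏ i, Su (us i) else 0)
            (fun n _ => hif n) hn₀


theorem stmt_9 {U : Type*} {m : ℕ}
    (Vset : Set (EuclideanSpace ℝ (Fin m))) (hcomp : IsCompact Vset)
    (L : U → EuclideanSpace ℝ (Fin m) → ℝ) (Δ L' ε δ : ℝ)
    (hΔ : 0 < Δ) (hL' : 0 < L') (hε : 0 < ε) (hδ : 0 < δ)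
    (hb : ∀ u v, |L u v| ≤ Δ)
    (hlip : ∀ u v₁ v₂, |L u v₁ - L u v₂| ≤ L' * dist v₁ v₂)
    (N : Finset (EuclideanSpace ℝ (Fin m))) (K : ℕ) (hKcard : N.card = K)
    (hNsub : ↑N ⊆ Vset)
    (hnet : ∀ v ∈ Vset, ∃ n ∈ N, dist v n ≤ ε / (2 * L'))
    (Su : U →₀ ℝ) (hSu : IsMix Su)
    (Sv : EuclideanSpace ℝ (Fin m) →₀ ℝ) (hSv : IsMix Sv)
    (hsupp : ↑Sv.support ⊆ Vset) (V₀ : ℝ)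
    (heq : (∀ u, V₀ ≤ mixExp Sv (fun v => L u v)) ∧
           (∀ v ∈ Vset, mixExp Su (fun u => L u v) ≤ V₀))
    (T : ℕ) (hT : 8 * Δ ^ 2 / ε ^ 2 * Real.log (2 * K / δ) ≤ (T : ℝ)) :
    1 - δ ≤ iidProb Su T (fun us => ∀ v ∈ Vset,
      empExp T us (fun u => L u v) ≤ V₀ + ε) := by
  classical
  set G : (Fin T → U) → Prop :=
    fun us => ∀ v ∈ Vset, empExp T us (fun u => L u v) ≤ V₀ + ε with hG_def
  set Bad : EuclideanSpace ℝ (Fin m) → (Fin T → U) → Prop :=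
    fun n us => V₀ + ε/2 < empExp T us (fun u => L u n) with hBad_def
  -- K ≥ 1
  have hsupp_ne : Sv.support.Nonempty := by
    rcases Finset.eq_empty_or_nonempty Sv.support with h | h
    · exfalso; have h2 := hSv.2; rw [h] at h2; simp at h2
    · exact h
  obtain ⟨v₀, hv₀⟩ := hsupp_ne
  obtain ⟨n₀, hn₀, -⟩ := hnet v₀ (hsupp hv₀)
  have hKpos : 0 < K := hKcard ▸ Finset.card_pos.2 ⟨n₀, hn₀⟩
  have hKR : (0:ℝ) < K := Nat.cast_pos.2 hKpos
  -- covering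
  have hcover : ∀ us : Fin T → U, ¬ G us → ∃ n ∈ N, Bad n us := by
    intro us hGn
    have hGn' : ∃ v ∈ Vset, V₀ + ε < empExp T us (fun u => L u v) := by
      by_contra hno
      push_neg at hno
      exact hGn (fun v hv => hno v hv)
    obtain ⟨v, hv, hgt⟩ := hGn'
    obtain ⟨n, hn, hdist⟩ := hnet v hv
    refine ⟨n, hn, ?_⟩
    have hdiff : |empExp T us (fun u => L u v) - empExp T us (fun u => L u n)|
        ≤ L' * dist v n := by
      unfold empExp
      rw [div_sub_div_same, abs_div, Nat.abs_cast]
      rcases Nat.eq_zero_or_pos T with h0 | hTpos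
      · subst h0
        simp
        exact mul_nonneg hL'.le dist_nonneg
      · rw [div_le_iff₀ (by exact_mod_cast hTpos)]
        calc |(∑ i, L (us i) v) - ∑ i, L (us i) n|
            = |∑ i, (L (us i) v - L (us i) n)| := by rw [Finset.sum_sub_distrib]
          _ ≤ ∑ i, |L (us i) v - L (us i) n| := Finset.abs_sum_le_sum_abs _ _
          _ ≤ ∑ _i : Fin T, L' * dist v n :=
              Finset.sum_le_sum fun i _ => hlip _ _ _
          _ = T * (L' * dist v n) := by
              rw [Finset.sum_const, Finset.card_univ, Fintype.card_fin, nsmul_eq_mul]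
          _ = L' * dist v n * T := by ring
    have hhalf : L' * dist v n ≤ ε/2 := by
      have := mul_le_mul_of_nonneg_left hdist hL'.le
      calc L' * dist v n ≤ L' * (ε/(2*L')) := this
        _ = ε/2 := by field_simp
    have habs := abs_le.1 hdiff
    show V₀ + ε/2 < empExp T us (fun u => L u n)
    linarith
  -- tail
  have htail : exp (-(T:ℝ) * (ε^2/(8*Δ^2))) ≤ δ/(2*K) := by
    have h2K : (0:ℝ) < 2*K/δ := by positivity
    have hc : (0:ℝ) < ε^2/(8*Δ^2) := by positivity
    have hlog : Real.log (2*K/δ) ≤ (T:ℝ) * (ε^2/(8*Δ^2)) := by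
      have h1 := mul_le_mul_of_nonneg_right hT hc.le
      have h2 : 8 * Δ^2 / ε^2 * Real.log (2*K/δ) * (ε^2/(8*Δ^2))
          = Real.log (2*K/δ) := by field_simp
      linarith [h2 ▸ h1]
    calc exp (-(T:ℝ) * (ε^2/(8*Δ^2))) ≤ exp (-(Real.log (2*K/δ))) := by
          apply exp_le_exp.2; linarith
      _ = (2*K/δ)⁻¹ := by rw [Real.exp_neg, Real.exp_log h2K]
      _ = δ/(2*K) := by rw [inv_div]
  -- union bound
  have hbadsum : iidProb Su T (fun us => ¬ G us) ≤ δ/2 := by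
    calc iidProb Su T (fun us => ¬ G us)
        ≤ ∑ n ∈ N, iidProb Su T (Bad n) := union_bound Su hSu.1 T G N Bad hcover
      _ ≤ ∑ _n ∈ N, δ/(2*K) := by
          apply Finset.sum_le_sum
          intro n hn
          have := chernoff Su hSu (fun u => L u n) Δ ε V₀ hΔ hε
            (fun u => hb u n) (heq.2 n (hNsub hn)) T
          exact this.trans htail
      _ = N.card * (δ/(2*K)) := by rw [Finset.sum_const, nsmul_eq_mul]
      _ = δ/2 := by rw [hKcard]; field_simp
  have hcompl := iidProb_add_compl Su hSu T G
  have : 1 - δ/2 ≤ iidProb Su T G := by linarith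
  have h2 : iidProb Su T G = iidProb Su T (fun us => ∀ v ∈ Vset,
      empExp T us (fun u => L u v) ≤ V₀ + ε) := by rw [hG_def]
  linarith [h2 ▸ this]
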